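/- Let a > 0 and define the double sequence c(l,k) for l,k ≥ 0 by: c(l,0) = c(0,k) = 0; c(1,k) = c(1,k-1)(a+k-1)/(k+3a+1) + c(k)(a+k-1)/(k+3a+1) for k > 0, where c(k) = B(k-1+a,a+2)/B(a,a+1); and c(l,k) = c(l,k-1)(al+k-1)/(l(1+a)+k+2a) + c(l-1,k)(l-2+a)/(l(1+a)+k+2a) for l > 1, k > 0. Then for every p > 1, with q = min{a,1}(p-1)/p, there exists a constant C̃ such that c(l,k) ≤ C̃ p^k/(1+q)^l for all l, k ≥ 1. -/

import Mathlib

set_option maxHeartbeats 1000000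


open Real

noncomputable def betaF (x y : ℝ) : ℝ := Real.Gamma x * Real.Gamma y / Real.Gamma (x + y)

theorem clk_exponential_bound (a : ℝ) (ha : 0 < a) (c : ℕ → ℕ → ℝ)
    (h00 : ∀ l : ℕ, c l 0 = 0) (h0k : ∀ k : ℕ, c 0 k = 0)
    (h1 : ∀ k : ℕ, 1 ≤ k →
      c 1 k = c 1 (k - 1) * ((a + (k : ℝ) - 1) / ((k : ℝ) + 3 * a + 1)) +
        (betaF ((k : ℝ) - 1 + a) (a + 2) / betaF a (a + 1)) *
          ((a + (k : ℝ) - 1) / ((k : ℝ) + 3 * a + 1)))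
    (hl : ∀ l k : ℕ, 2 ≤ l → 1 ≤ k →
      c l k = c l (k - 1) *
          ((a * (l : ℝ) + (k : ℝ) - 1) / ((l : ℝ) * (1 + a) + (k : ℝ) + 2 * a)) +
        c (l - 1) k *
          (((l : ℝ) - 2 + a) / ((l : ℝ) * (1 + a) + (k : ℝ) + 2 * a))) :
    ∀ p : ℝ, 1 < p → ∃ C : ℝ,
      ∀ l k : ℕ, 1 ≤ l → 1 ≤ k →
        c l k ≤ C * p ^ (k : ℝ) / (1 + min a 1 * (p - 1) / p) ^ (l : ℝ) := by
  intro p hp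
  have hp0 : (0:ℝ) < p := lt_trans one_pos hp
  set m : ℝ := min a 1 with hmdef
  have hm0 : 0 < m := lt_min ha one_pos
  have hma : m ≤ a := min_le_left _ _
  have hm1 : m ≤ 1 := min_le_right _ _
  set q : ℝ := m * (p - 1) / p with hqdef
  have hq0 : 0 < q := by
    have hp1 : 0 < p - 1 := by linarith
    rw [hqdef]; positivity
  have h1q : (0:ℝ) < 1 + q := by linarith
  have hpq : p * (1 + q) = p + m * (p - 1) := by
    rw [hqdef, mul_add, mul_one, mul_div_assoc', mul_div_cancel_left₀ _ hp0.ne']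
  -- the sequence b
  set b : ℕ → ℝ := fun k => betaF ((k : ℝ) - 1 + a) (a + 2) / betaF a (a + 1) with hbdef
  have hGpos : ∀ x : ℝ, 0 < x → 0 < Real.Gamma x := fun x hx => Real.Gamma_pos_of_pos hx
  have hbetapos : ∀ x y : ℝ, 0 < x → 0 < y → 0 < betaF x y := by
    intro x y hx hy
    unfold betaF
    have := hGpos x hx
    have := hGpos y hy
    have := hGpos (x + y) (by linarith)
    positivity
  have hbpos : ∀ k : ℕ, 1 ≤ k → 0 < b k := by
    intro k hk
    have hk1 : (1:ℝ) ≤ (k:ℝ) := by exact_mod_cast hk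
    have h1 : 0 < betaF ((k:ℝ) - 1 + a) (a + 2) := hbetapos _ _ (by linarith) (by linarith)
    have h2 : 0 < betaF a (a + 1) := hbetapos _ _ ha (by linarith)
    exact div_pos h1 h2
  have hbstep : ∀ k : ℕ, 1 ≤ k → b (k + 1) ≤ b k := by
    intro k hk
    have hk1 : (1:ℝ) ≤ (k:ℝ) := by exact_mod_cast hk
    set x : ℝ := (k:ℝ) - 1 + a with hxdef
    have hx : 0 < x := by simp only [hxdef]; linarith
    have hxa : 0 < x + (a + 2) := by linarith
    have hrec : betaF (x + 1) (a + 2) = betaF x (a + 2) * (x / (x + (a + 2))) := by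
      unfold betaF
      rw [Real.Gamma_add_one hx.ne', show x + 1 + (a + 2) = (x + (a + 2)) + 1 from by ring,
        Real.Gamma_add_one hxa.ne']
      have hG2 : Real.Gamma (x + (a + 2)) ≠ 0 := (hGpos _ hxa).ne'
      field_simp
    have hcast : ((k + 1 : ℕ) : ℝ) - 1 + a = x + 1 := by push_cast; simp only [hxdef]; ring
    have hbk : b (k + 1) = b k * (x / (x + (a + 2))) := by
      simp only [hbdef, hcast, hrec]
      ring
    rw [hbk]
    have hfrac : x / (x + (a + 2)) ≤ 1 := by
      rw [div_le_one hxa]; linarith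
    have := hbpos k hk
    nlinarith [div_nonneg hx.le hxa.le]
  have hbid : ∀ k : ℕ, betaF ((k : ℝ) - 1 + a) (a + 2) / betaF a (a + 1) = b k := by
    intro k; rw [hbdef]
  have hble : ∀ k : ℕ, 1 ≤ k → b k ≤ b 1 := by
    intro k hk
    induction k with
    | zero => omega
    | succ n ih =>
      rcases Nat.lt_or_ge 1 (n + 1) with h | h
      · exact le_trans (hbstep n (by omega)) (ih (by omega))
      · have hn0 : n = 0 := by omega
        subst hn0; exact le_rfl
  -- the constant
  clear_value m q b
  have hb1 : 0 < b 1 := hbpos 1 le_rfl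
  set M : ℝ := b 1 * (1 + q) / (p - 1) with hMdef
  clear_value M
  have hp1 : 0 < p - 1 := by linarith
  have hM : 0 < M := by rw [hMdef]; positivity
  have hb1M : b 1 = M * (p - 1) / (1 + q) := by
    rw [hMdef]
    field_simp
  -- main induction
  have key : ∀ l : ℕ, 1 ≤ l → ∀ k : ℕ, c l k ≤ M * p ^ k / (1 + q) ^ l := by
    intro l hl
    induction l, hl using Nat.le_induction with
    | base =>
      intro k
      induction k with
      | zero =>
        rw [h00]
        positivity
      | succ k ih =>
        simp only [pow_one] at ih ⊢
        have hrec := h1 (k + 1) (by omega)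
        simp only [Nat.add_sub_cancel] at hrec
        rw [hbid (k + 1)] at hrec
        have hK : ((k + 1 : ℕ) : ℝ) = (k : ℝ) + 1 := by push_cast; ring
        rw [hK] at hrec
        have hk0 : (0:ℝ) ≤ (k:ℝ) := Nat.cast_nonneg k
        set r : ℝ := (a + ((k:ℝ) + 1) - 1) / (((k:ℝ) + 1) + 3 * a + 1) with hrdef
        have hr0 : 0 ≤ r := by
          rw [hrdef]; apply div_nonneg <;> nlinarith
        have hr1 : r ≤ 1 := by
          rw [hrdef, div_le_one (by nlinarith)]; nlinarith
        clear_value r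
        have hbb : b (k + 1) ≤ M * (p - 1) / (1 + q) := by
          rw [← hb1M]; exact hble (k + 1) (by omega)
        have hSnn : (0:ℝ) ≤ M * p ^ k / (1 + q) + M * (p - 1) / (1 + q) := by
          have h1' : (0:ℝ) ≤ M * p ^ k / (1 + q) := by positivity
          have h2' : (0:ℝ) ≤ M * (p - 1) / (1 + q) := by
            apply div_nonneg _ h1q.le; nlinarith
          linarith
        have step1 : c 1 (k + 1) ≤ (M * p ^ k / (1 + q) + M * (p - 1) / (1 + q)) * r := by
          rw [hrec]
          have : c 1 k * r + b (k + 1) * r = (c 1 k + b (k + 1)) * r := by ring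
          rw [this]
          apply mul_le_mul_of_nonneg_right _ hr0
          linarith
        have step2 : (M * p ^ k / (1 + q) + M * (p - 1) / (1 + q)) * r ≤
            M * p ^ k / (1 + q) + M * (p - 1) / (1 + q) :=
          mul_le_of_le_one_right hSnn hr1
        have hpow : (1:ℝ) ≤ p ^ k := one_le_pow₀ hp.le
        have step3 : M * p ^ k / (1 + q) + M * (p - 1) / (1 + q) ≤ M * p ^ (k + 1) / (1 + q) := by
          rw [← add_div, div_le_div_iff₀ h1q h1q, pow_succ]
          nlinarith [mul_nonneg (mul_nonneg (mul_nonneg hM.le hp1.le) (sub_nonneg.2 hpow)) h1q.le]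
        linarith
    | succ l hl' ihl =>
      intro k
      induction k with
      | zero =>
        rw [h00]
        positivity
      | succ k ih =>
        have hrec := hl (l + 1) (k + 1) (by omega) (by omega)
        have hl1n : 1 ≤ l := hl'
        simp only [Nat.add_sub_cancel] at hrec
        have hL : ((l + 1 : ℕ) : ℝ) = (l : ℝ) + 1 := by push_cast; ring
        have hK : ((k + 1 : ℕ) : ℝ) = (k : ℝ) + 1 := by push_cast; ring
        rw [hL, hK] at hrec
        have hl1 : (1:ℝ) ≤ (l:ℝ) := by exact_mod_cast hl'
        have hk0 : (0:ℝ) ≤ (k:ℝ) := Nat.cast_nonneg k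
        set D : ℝ := ((l:ℝ) + 1) * (1 + a) + ((k:ℝ) + 1) + 2 * a with hDdef
        have hD : 0 < D := by simp only [hDdef]; nlinarith
        set r1 : ℝ := (a * ((l:ℝ) + 1) + ((k:ℝ) + 1) - 1) / D with hr1def
        set r2 : ℝ := (((l:ℝ) + 1) - 2 + a) / D with hr2def
        have hr1n : 0 ≤ r1 := by apply div_nonneg _ hD.le; nlinarith
        have hr2n : 0 ≤ r2 := by apply div_nonneg _ hD.le; nlinarith
        have ihk : c l (k + 1) ≤ M * p ^ (k + 1) / (1 + q) ^ l := ihl (k + 1)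
        have step1 : c (l + 1) (k + 1) ≤
            (M * p ^ k / (1 + q) ^ (l + 1)) * r1 + (M * p ^ (k + 1) / (1 + q) ^ l) * r2 := by
          rw [hrec]
          gcongr
        -- core polynomial inequality
        have core : (a * ((l:ℝ) + 1) + ((k:ℝ) + 1) - 1) + p * (1 + q) * (((l:ℝ) + 1) - 2 + a)
            ≤ p * D := by
          rw [hpq, hDdef]
          nlinarith [mul_nonneg (sub_nonneg.2 hp.le) (sub_nonneg.2 hma),
            mul_nonneg (sub_nonneg.2 hp.le) (sub_nonneg.2 hm1),
            mul_nonneg (mul_nonneg (sub_nonneg.2 hp.le) (sub_nonneg.2 hma)) (by linarith : (0:ℝ) ≤ (l:ℝ)),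
            mul_nonneg (sub_nonneg.2 hp.le) hk0,
            mul_nonneg (mul_nonneg hp0.le ha.le) (sub_nonneg.2 hm1),
            mul_nonneg hm0.le ha.le,
            mul_nonneg hm0.le (sub_nonneg.2 hp.le)]
        set X : ℝ := M * p ^ k / (1 + q) ^ (l + 1) with hXdef
        have hX : 0 < X := by positivity
        have hB : M * p ^ (k + 1) / (1 + q) ^ l = X * (p * (1 + q)) := by
          rw [hXdef]
          field_simp
          ring
        have step2 : (M * p ^ k / (1 + q) ^ (l + 1)) * r1 + (M * p ^ (k + 1) / (1 + q) ^ l) * r2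
            ≤ M * p ^ (k + 1) / (1 + q) ^ (l + 1) := by
          rw [hB]
          have hgoal : M * p ^ (k + 1) / (1 + q) ^ (l + 1) = X * p := by
            rw [hXdef]; field_simp; ring
          rw [hgoal]
          have : X * r1 + X * (p * (1 + q)) * r2 = X * (r1 + p * (1 + q) * r2) := by ring
          rw [← hXdef, this]
          apply mul_le_mul_of_nonneg_left _ hX.le
          have hsum : r1 + p * (1 + q) * r2 =
              (a * ((l:ℝ) + 1) + ((k:ℝ) + 1) - 1 + p * (1 + q) * (((l:ℝ) + 1) - 2 + a)) / D := by
            rw [hr1def, hr2def]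
            field_simp
          rw [hsum, div_le_iff₀ hD]
          linarith [core]
        linarith
  refine ⟨M, ?_⟩
  intro l k hl hk
  rw [Real.rpow_natCast, Real.rpow_natCast]
  exact key l hl k
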